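/- arXiv:1805.07196 — 2 statements merged into one kernel-verified Lean document; each statement's English description precedes it below -/
import Mathlib

section
/- Correctness of the controllability-verification algorithm: Let G = (X, x0, Σ, δ, ρ) be a PDES with controllable events Σc and uncontrollable events Σuc, and H = (Q, q0, Σ, δH, ρH) a probabilistic automaton with L_H ⊆ L_G, and let G_tc be the associated controllability-testing automaton. Then L_H is not probabilistic controllable w.r.t. G and Σc if and only if the state d of G_tc is reachable from the initial state (x0, q0). -/
open scoped BigOperators

noncomputable section

/-- Chain product: given step weights `w s σ` (interpreted as the conditional
probability of event `σ` after string `s`), `chainProd w pre rest` multiplies the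
weights along `rest`, starting from the already-consumed prefix `pre`. -/
def chainProd {E : Type*} (w : List E → E → ℝ) : List E → List E → ℝ
  | _, [] => 1
  | pre, σ :: rest => w pre σ * chainProd w (pre ++ [σ]) rest

/-- The (probabilistic) language generated by step weights `w`:
`langOf w [] = 1` and `langOf w (s ++ [σ]) = langOf w s * w s σ`. -/
def langOf {E : Type*} (w : List E → E → ℝ) : List E → ℝ := chainProd w []

/-- A probabilistic language over a finite event set `E`. -/
structure PLang (E : Type*) [Fintype E] where
  toFun : List E → ℝ
  nonneg : ∀ s, 0 ≤ toFun s
  le_one : ∀ s, toFun s ≤ 1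
  eps : toFun [] = 1
  step : ∀ s, (∑ σ : E, toFun (s ++ [σ])) ≤ toFun s

/-- `L1` is a probabilistic sublanguage of `L2`. -/
def PSub {E : Type*} (L1 L2 : List E → ℝ) : Prop :=
  (∀ s, 0 < L1 s → 0 < L2 s) ∧
  ∀ s, 0 < L1 s → ∀ σ : E, L1 (s ++ [σ]) / L1 s ≤ L2 (s ++ [σ]) / L2 s

/-- Intersection of probabilistic languages. -/
def pInter {E : Type*} (L1 L2 : List E → ℝ) : List E → ℝ :=
  langOf fun s σ => min (L1 (s ++ [σ]) / L1 s) (L2 (s ++ [σ]) / L2 s)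

/-- Natural projection erasing the events outside the observable set `So`. -/
def proj {E : Type*} [DecidableEq E] (So : Finset E) (s : List E) : List E :=
  s.filter fun σ => decide (σ ∈ So)

/-- A probabilistic discrete event system (probabilistic automaton). -/
structure PDES (X : Type*) (E : Type*) [Fintype E] where
  x0 : X
  trans : X → E → Option X
  prob : X → E → ℝ
  prob_nonneg : ∀ x σ, 0 ≤ prob x σ
  prob_le_one : ∀ x σ, prob x σ ≤ 1
  prob_pos_iff : ∀ x σ, 0 < prob x σ ↔ (trans x σ).isSome
  sum_le_one : ∀ x, (∑ σ : E, prob x σ) ≤ 1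

/-- Extension of the partial transition function to strings. -/
def PDES.transStar {X E : Type*} [Fintype E] (G : PDES X E) (s : List E) : Option X :=
  s.foldl (fun ox σ => ox.bind fun x => G.trans x σ) (some G.x0)

/-- Step weight of a PDES: `ρ(δ(x0,s),σ)` when `δ(x0,s)` is defined, `0` otherwise. -/
def PDES.w {X E : Type*} [Fintype E] (G : PDES X E) (s : List E) (σ : E) : ℝ :=
  (G.transStar s).elim 0 fun x => G.prob x σ

/-- The probabilistic language generated by a PDES. -/
def PDES.lang {X E : Type*} [Fintype E] (G : PDES X E) : List E → ℝ := langOf G.w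

/-- The set of control patterns: subsets of events containing every uncontrollable event. -/
def ControlPatterns {E : Type*} [Fintype E] [DecidableEq E] (Sc : Finset E) :
    Finset (Finset E) :=
  Finset.univ.filter fun θ => Scᶜ ⊆ θ

/-- `Sp` is a probabilistic P-supervisor for `G`: to every observation of a string in the
support of `L_G` it assigns a probability distribution on the control patterns. -/
def IsSupervisor {X E : Type*} [Fintype E] [DecidableEq E] (G : PDES X E)
    (Sc So : Finset E) (Sp : List E → Finset E → ℝ) : Prop :=
  ∀ s : List E, 0 < G.lang s →
    (∀ θ ∈ ControlPatterns Sc, 0 ≤ Sp (proj So s) θ) ∧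
    (∑ θ ∈ ControlPatterns Sc, Sp (proj So s) θ) = 1

/-- The controlled probabilistic language `L_{Sp/G}`. -/
def supLang {X E : Type*} [Fintype E] [DecidableEq E] (G : PDES X E)
    (Sc So : Finset E) (Sp : List E → Finset E → ℝ) : List E → ℝ :=
  langOf fun s σ =>
    G.w s σ * ∑ θ ∈ (ControlPatterns Sc).filter (fun θ => σ ∈ θ), Sp (proj So s) θ

/-- `K` is a scaling-factor function for `G`: on every observation of a string in the
support of `L_G` it takes values in `[0,1]` and equals `1` on uncontrollable events. -/
def IsScaling {X E : Type*} [Fintype E] [DecidableEq E] (G : PDES X E)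
    (Sc So : Finset E) (K : List E → E → ℝ) : Prop :=
  ∀ s : List E, 0 < G.lang s → ∀ σ : E,
    0 ≤ K (proj So s) σ ∧ K (proj So s) σ ≤ 1 ∧ (σ ∉ Sc → K (proj So s) σ = 1)

/-- The controlled probabilistic language `L_{K/G}`. -/
def kLang {X E : Type*} [Fintype E] [DecidableEq E] (G : PDES X E)
    (So : Finset E) (K : List E → E → ℝ) : List E → ℝ :=
  langOf fun s σ => G.w s σ * K (proj So s) σ

/-- Probabilistic controllability (language form). -/
def ProbControllable {E : Type*} (L M : List E → ℝ) (Sc : Finset E) : Prop :=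
  ∀ s : List E, 0 < L s → ∀ σ : E, σ ∉ Sc →
    L (s ++ [σ]) / L s = M (s ++ [σ]) / M s

/-- Probabilistic observability (language form). -/
def ProbObservable {E : Type*} [DecidableEq E] (L M : List E → ℝ)
    (Sc So : Finset E) : Prop :=
  ∀ s1 s2 : List E, 0 < L s1 → 0 < L s2 → proj So s1 = proj So s2 →
    ∀ σ ∈ Sc,
      (M (s1 ++ [σ]) / M s1) * (L (s2 ++ [σ]) / L s2) =
      (M (s2 ++ [σ]) / M s2) * (L (s1 ++ [σ]) / L s1)

/-- Probabilistic controllability (automata form). -/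
def AutControllable {X Q E : Type*} [Fintype E] (G : PDES X E) (H : PDES Q E)
    (Sc : Finset E) : Prop :=
  ∀ s : List E, 0 < H.lang s → ∀ x q,
    G.transStar s = some x → H.transStar s = some q →
    ∀ σ : E, σ ∉ Sc → H.prob q σ = G.prob x σ

/-- Probabilistic observability (automata form). -/
def AutObservable {X Q E : Type*} [Fintype E] [DecidableEq E] (G : PDES X E)
    (H : PDES Q E) (Sc So : Finset E) : Prop :=
  ∀ s1 s2 : List E, 0 < H.lang s1 → 0 < H.lang s2 → proj So s1 = proj So s2 →
    ∀ x1 q1 x2 q2,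
      G.transStar s1 = some x1 → H.transStar s1 = some q1 →
      G.transStar s2 = some x2 → H.transStar s2 = some q2 →
      ∀ σ ∈ Sc, G.prob x1 σ * H.prob q2 σ = G.prob x2 σ * H.prob q1 σ

/-- Reachability in the controllability-testing automaton `G_tc`.
States are pairs `(x,q)` (as `Sum.inl`) together with the special state `d` (`Sum.inr ()`). -/
inductive TcReach {X Q E : Type*} [Fintype E] (G : PDES X E) (H : PDES Q E)
    (Sc : Finset E) : (X × Q) ⊕ Unit → Prop
  | init : TcReach G H Sc (Sum.inl (G.x0, H.x0))
  | good (x q x' q' σ) : TcReach G H Sc (Sum.inl (x, q)) →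
      G.trans x σ = some x' → H.trans q σ = some q' →
      ((σ ∉ Sc ∧ G.prob x σ = H.prob q σ) ∨ σ ∈ Sc) →
      TcReach G H Sc (Sum.inl (x', q'))
  | bad (x q σ) : TcReach G H Sc (Sum.inl (x, q)) →
      σ ∉ Sc → G.prob x σ ≠ H.prob q σ →
      TcReach G H Sc (Sum.inr ())

/-- Reachability in the observability-testing automaton `G_to`.
States are 4-tuples `(x1,q1,x2,q2)` (as `Sum.inl`) together with the special state `d`. -/
inductive ToReach {X Q E : Type*} [Fintype E] (G : PDES X E) (H : PDES Q E)
    (Sc So : Finset E) : (X × Q × X × Q) ⊕ Unit → Prop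
  | init : ToReach G H Sc So (Sum.inl (G.x0, H.x0, G.x0, H.x0))
  | sync (x1 q1 x2 q2 x1' q1' x2' q2' σ) :
      ToReach G H Sc So (Sum.inl (x1, q1, x2, q2)) →
      G.trans x1 σ = some x1' → H.trans q1 σ = some q1' →
      G.trans x2 σ = some x2' → H.trans q2 σ = some q2' →
      (σ ∉ Sc ∨ (σ ∈ Sc ∧ G.prob x1 σ * H.prob q2 σ = G.prob x2 σ * H.prob q1 σ)) →
      ToReach G H Sc So (Sum.inl (x1', q1', x2', q2'))
  | bad (x1 q1 x2 q2 σ) :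
      ToReach G H Sc So (Sum.inl (x1, q1, x2, q2)) →
      σ ∈ Sc → G.prob x1 σ * H.prob q2 σ ≠ G.prob x2 σ * H.prob q1 σ →
      ToReach G H Sc So (Sum.inr ())
  | left (x1 q1 x2 q2 x1' q1' σ) :
      ToReach G H Sc So (Sum.inl (x1, q1, x2, q2)) → σ ∉ So →
      G.trans x1 σ = some x1' → H.trans q1 σ = some q1' →
      ToReach G H Sc So (Sum.inl (x1', q1', x2, q2))
  | right (x1 q1 x2 q2 x2' q2' σ) :
      ToReach G H Sc So (Sum.inl (x1, q1, x2, q2)) → σ ∉ So →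
      G.trans x2 σ = some x2' → H.trans q2 σ = some q2' →
      ToReach G H Sc So (Sum.inl (x1, q1, x2', q2'))

/-- `H` is a probabilistic subautomaton of `G`, as witnessed by the state inclusion `e`. -/
def SubautomatonVia {Q X E : Type*} [Fintype E] (H : PDES Q E) (G : PDES X E)
    (e : Q → X) : Prop :=
  Function.Injective e ∧ e H.x0 = G.x0 ∧
  ∀ q σ, H.prob q σ ≤ G.prob (e q) σ ∧
    ∀ q', H.trans q σ = some q' → G.trans (e q) σ = some (e q')

/-- The product of two PDESs. -/
def PDES.prod {X Q E : Type*} [Fintype E] (G : PDES X E) (H : PDES Q E) :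
    PDES (X × Q) E where
  x0 := (G.x0, H.x0)
  trans := fun p σ => (G.trans p.1 σ).bind fun x => (H.trans p.2 σ).map fun q => (x, q)
  prob := fun p σ => min (G.prob p.1 σ) (H.prob p.2 σ)
  prob_nonneg := fun p σ => le_min (G.prob_nonneg _ _) (H.prob_nonneg _ _)
  prob_le_one := fun p σ => le_trans (min_le_left _ _) (G.prob_le_one _ _)
  prob_pos_iff := by
    intro p σ
    rw [lt_min_iff, G.prob_pos_iff, H.prob_pos_iff]
    cases hG : G.trans p.1 σ <;> cases hH : H.trans p.2 σ <;> simp [hG, hH]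
  sum_le_one := fun p =>
    le_trans (Finset.sum_le_sum fun σ _ => min_le_left _ _) (G.sum_le_one p.1)

end

section Aux

variable {E : Type*}

lemma chainProd_snoc (w : List E → E → ℝ) :
    ∀ (rest pre : List E) (σ : E),
      chainProd w pre (rest ++ [σ]) = chainProd w pre rest * w (pre ++ rest) σ
  | [], pre, σ => by simp [chainProd]
  | τ :: rest, pre, σ => by
    simp [chainProd, chainProd_snoc w rest (pre ++ [τ]) σ, mul_assoc]

lemma langOf_snoc (w : List E → E → ℝ) (s : List E) (σ : E) :
    langOf w (s ++ [σ]) = langOf w s * w s σ := by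
  simpa [langOf] using chainProd_snoc w s [] σ

variable {X Q : Type*} [Fintype E]

lemma transStar_snoc (G : PDES X E) (s : List E) (σ : E) :
    G.transStar (s ++ [σ]) = (G.transStar s).bind fun x => G.trans x σ := by
  simp [PDES.transStar, List.foldl_append]

lemma w_eq (G : PDES X E) {s : List E} {x : X} (h : G.transStar s = some x) (σ : E) :
    G.w s σ = G.prob x σ := by simp [PDES.w, h]

lemma w_nonneg (G : PDES X E) (s : List E) (σ : E) : 0 ≤ G.w s σ := by
  unfold PDES.w
  cases G.transStar s <;> simp [Option.elim, G.prob_nonneg]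

lemma lang_nonneg (G : PDES X E) (s : List E) : 0 ≤ G.lang s := by
  induction s using List.reverseRecOn with
  | nil => simp [PDES.lang, langOf, chainProd]
  | append_singleton s σ ih =>
    rw [PDES.lang, langOf_snoc]
    exact mul_nonneg ih (w_nonneg G s σ)

lemma lang_pos_snoc (G : PDES X E) {s : List E} {σ : E}
    (h : 0 < G.lang (s ++ [σ])) : 0 < G.lang s ∧ 0 < G.w s σ := by
  rw [PDES.lang, langOf_snoc] at h
  constructor
  · rcases lt_or_eq_of_le (lang_nonneg G s) with h' | h'
    · exact h'
    · exfalso; rw [PDES.lang] at h'; rw [← h'] at h; simp at h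
  · rcases lt_or_eq_of_le (w_nonneg G s σ) with h' | h'
    · exact h'
    · exfalso; rw [← h'] at h; simp at h

lemma lang_pos_transStar (G : PDES X E) {s : List E} (h : 0 < G.lang s) :
    ∃ x, G.transStar s = some x := by
  induction s using List.reverseRecOn with
  | nil => exact ⟨G.x0, rfl⟩
  | append_singleton s σ ih =>
    obtain ⟨h1, h2⟩ := lang_pos_snoc G h
    obtain ⟨x, hx⟩ := ih h1
    rw [w_eq G hx σ, G.prob_pos_iff] at h2
    rw [transStar_snoc, hx]
    exact ⟨(G.trans x σ).get h2, by simp⟩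

lemma reach_inl (G : PDES X E) (H : PDES Q E) (Sc : Finset E) :
    ∀ st, TcReach G H Sc st →
      ∀ x q, st = Sum.inl (x, q) →
        ∃ s : List E, G.transStar s = some x ∧ H.transStar s = some q ∧
          0 < H.lang s := by
  intro st h
  induction h with
  | init =>
    intro x q hxq
    injection hxq with h'
    obtain ⟨hx, hq⟩ := Prod.mk.injEq .. ▸ h'
    exact ⟨[], by simp [PDES.transStar, hx], by simp [PDES.transStar, hq],
      by simp [PDES.lang, langOf, chainProd]⟩
  | good x q x' q' σ _ hGx hHq _ ih =>
    intro a b hab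
    injection hab with h'
    obtain ⟨ha, hb⟩ := Prod.mk.injEq .. ▸ h'
    obtain ⟨s, hG, hH, hpos⟩ := ih x q rfl
    refine ⟨s ++ [σ], ?_, ?_, ?_⟩
    · rw [transStar_snoc, hG]; simp [hGx, ← ha]
    · rw [transStar_snoc, hH]; simp [hHq, ← hb]
    · rw [PDES.lang, langOf_snoc]
      refine mul_pos hpos ?_
      rw [w_eq H hH σ, H.prob_pos_iff, hHq]
      simp
  | bad x q σ _ _ _ _ => intro a b hab; exact absurd hab (by simp)

lemma string_to_reach (G : PDES X E) (H : PDES Q E) (Sc : Finset E) :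
    ∀ s : List E, 0 < H.lang s → ∀ x q,
      G.transStar s = some x → H.transStar s = some q →
      TcReach G H Sc (Sum.inl (x, q)) ∨ TcReach G H Sc (Sum.inr ()) := by
  intro s
  induction s using List.reverseRecOn with
  | nil =>
    intro _ x q hx hq
    simp [PDES.transStar] at hx hq
    subst hx; subst hq
    exact Or.inl TcReach.init
  | append_singleton s σ ih =>
    intro hpos x' q' hx' hq'
    obtain ⟨h1, _⟩ := lang_pos_snoc H hpos
    rw [transStar_snoc] at hx' hq'
    obtain ⟨x, hx⟩ := Option.bind_eq_some_iff.mp hx'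
    obtain ⟨q, hq⟩ := Option.bind_eq_some_iff.mp hq'
    rcases ih h1 x q hx.1 hq.1 with h | h
    · by_cases hc : σ ∈ Sc
      · exact Or.inl (TcReach.good x q x' q' σ h hx.2 hq.2 (Or.inr hc))
      · by_cases he : G.prob x σ = H.prob q σ
        · exact Or.inl (TcReach.good x q x' q' σ h hx.2 hq.2 (Or.inl ⟨hc, he⟩))
        · exact Or.inr (TcReach.bad x q σ h hc he)
    · exact Or.inr h

end Aux

/-- correctness of the controllability-verification algorithm. -/
theorem not_controllable_iff_d_reachable {X Q E : Type*} [Fintype E]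
    (G : PDES X E) (H : PDES Q E) (Sc : Finset E)
    (hsub : PSub H.lang G.lang) :
    ¬ AutControllable G H Sc ↔ TcReach G H Sc (Sum.inr ()) := by
  constructor
  · intro hnc
    unfold AutControllable at hnc
    push_neg at hnc
    obtain ⟨s, hpos, x, q, hx, hq, σ, hσ, hne⟩ := hnc
    rcases string_to_reach G H Sc s hpos x q hx hq with h | h
    · exact TcReach.bad x q σ h hσ (fun he => hne he.symm)
    · exact h
  · intro hd hc
    cases hd with
    | bad x q σ hxy hσ hne =>
      obtain ⟨s, hGx, hHq, hpos⟩ := reach_inl G H Sc _ hxy x q rfl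
      exact hne (hc s hpos x q hGx hHq σ hσ).symm
end

section
/- Let L1, L2 and M be probabilistic languages over Σ with L1 ⊆ M and L2 ⊆ M. If L1 and L2 are both probabilistic controllable w.r.t. M and Σc, then L1 ∩ L2 is probabilistic controllable w.r.t. M and Σc. -/
open scoped BigOperators

theorem chainProd_append {E : Type*} (w : List E → E → ℝ) (s : List E) (σ : E) :
    ∀ pre, chainProd w pre (s ++ [σ]) = chainProd w pre s * w (pre ++ s) σ := by
  induction s with
  | nil => intro pre; simp [chainProd]
  | cons a t ih =>
      intro pre
      show w pre a * chainProd w (pre ++ [a]) (t ++ [σ]) = _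
      rw [ih (pre ++ [a]), List.append_assoc]
      simp [chainProd, mul_assoc]

theorem langOf_append {E : Type*} (w : List E → E → ℝ) (s : List E) (σ : E) :
    langOf w (s ++ [σ]) = langOf w s * w s σ := by
  simpa [langOf] using chainProd_append w s σ []

theorem pInter_pos {E : Type*} (L1 L2 : List E → ℝ)
    (hn1 : ∀ s, 0 ≤ L1 s) (hn2 : ∀ s, 0 ≤ L2 s)
    (hL1 : L1 [] = 1) (hL2 : L2 [] = 1) :
    ∀ s, 0 < pInter L1 L2 s → 0 < L1 s ∧ 0 < L2 s := by
  intro s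
  induction s using List.reverseRecOn with
  | nil => intro _; constructor <;> simp [hL1, hL2]
  | append_singleton t σ ih =>
      intro hpos
      rw [pInter, langOf_append] at hpos
      have hmin : (0:ℝ) ≤ min (L1 (t ++ [σ]) / L1 t) (L2 (t ++ [σ]) / L2 t) :=
        le_min (div_nonneg (hn1 _) (hn1 _)) (div_nonneg (hn2 _) (hn2 _))
      rcases mul_pos_iff.mp hpos with ⟨ht, hm⟩ | ⟨_, hm⟩
      · obtain ⟨h1, h2⟩ := ih ht
        rw [lt_min_iff] at hm
        constructor
        · rcases (div_pos_iff).mp hm.1 with ⟨h, _⟩ | ⟨_, h⟩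
          · exact h
          · exact absurd h (not_lt.mpr h1.le)
        · rcases (div_pos_iff).mp hm.2 with ⟨h, _⟩ | ⟨_, h⟩
          · exact h
          · exact absurd h (not_lt.mpr h2.le)
      · exact absurd hm (not_lt.mpr hmin)

/-- probabilistic controllability is closed under intersection. -/
theorem pInter_probControllable {E : Type*} [Fintype E]
    (L1 L2 M : PLang E) (Sc : Finset E)
    (h1 : PSub L1.toFun M.toFun) (h2 : PSub L2.toFun M.toFun)
    (hc1 : ProbControllable L1.toFun M.toFun Sc)
    (hc2 : ProbControllable L2.toFun M.toFun Sc) :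
    ProbControllable (pInter L1.toFun L2.toFun) M.toFun Sc := by
  intro s hs σ hσ
  obtain ⟨h1, h2⟩ := pInter_pos L1.toFun L2.toFun L1.nonneg L2.nonneg L1.eps L2.eps s hs
  have hkey : pInter L1.toFun L2.toFun (s ++ [σ]) =
      pInter L1.toFun L2.toFun s *
        min (L1.toFun (s ++ [σ]) / L1.toFun s) (L2.toFun (s ++ [σ]) / L2.toFun s) := by
    rw [pInter, langOf_append]
  rw [hkey, mul_div_cancel_left₀ _ (ne_of_gt hs), hc1 s h1 σ hσ,
    hc2 s h2 σ hσ, min_self]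
end
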